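/- For any 2k points x₁,…,x_{2k} on the unit sphere S², the sum over all unordered pairs of the spherical (geodesic) distances satisfies ∑_{i<j} d(x_i,x_j) ≤ πk², with equality when the configuration is symmetric about the sphere's center. -/

import Mathlib

open Finset Real
open scoped RealInnerProductSpace

noncomputable section
namespace SphSum


def c (m : ℕ) : ℝ := (Nat.centralBinom m : ℝ) / 4 ^ m

lemma c_zero : c 0 = 1 := by simp [c, Nat.centralBinom]

lemma c_pos (m : ℕ) : 0 < c m := by
  have h : (0:ℝ) < (Nat.centralBinom m : ℝ) := by exact_mod_cast Nat.centralBinom_pos m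
  have h4 : (0:ℝ) < 4 ^ m := by positivity
  exact div_pos h h4

lemma c_succ (m : ℕ) : (2 * (m:ℝ) + 2) * c (m + 1) = (2 * m + 1) * c m := by
  have h := Nat.succ_mul_centralBinom_succ m
  have h' : ((m:ℝ) + 1) * (Nat.centralBinom (m+1) : ℝ) = 2 * (2 * m + 1) * Nat.centralBinom m := by
    exact_mod_cast congrArg (Nat.cast : ℕ → ℝ) h
  have h4 : (4:ℝ) ^ (m+1) = 4 * 4 ^ m := by ring
  rw [c, c, h4]; field_simp
  nlinarith [h', pow_pos (show (0:ℝ) < 4 by norm_num) m]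

lemma c_le_one (m : ℕ) : c m ≤ 1 := by
  induction m with
  | zero => simp [c_zero]
  | succ n ih =>
    have h := c_succ n
    have hpos : (0:ℝ) < 2 * n + 2 := by positivity
    have : c (n+1) = (2 * n + 1) / (2 * n + 2) * c n := by
      field_simp; linarith [h]
    rw [this]
    have h1 : (2 * (n:ℝ) + 1) / (2 * n + 2) ≤ 1 := by
      rw [div_le_one hpos]; linarith
    calc (2 * (n:ℝ) + 1) / (2 * n + 2) * c n ≤ 1 * c n := by
          apply mul_le_mul_of_nonneg_right h1 (c_pos n).le
      _ ≤ 1 := by simpa using ih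


lemma abs_c_le_one (m : ℕ) : |c m| ≤ 1 :=
  abs_le.mpr ⟨by linarith [c_pos m], c_le_one m⟩

lemma key_summable {r : ℝ} (hr : |r| < 1) : Summable fun m : ℕ => ((m:ℝ) + 1) * |r| ^ m := by
  have h1 : Summable fun m : ℕ => ((m:ℝ) ^ 1) * |r| ^ m :=
    summable_pow_mul_geometric_of_norm_lt_one 1 (by simpa using hr)
  have h2 : Summable fun m : ℕ => |r| ^ m := summable_geometric_of_lt_one (abs_nonneg r) hr
  exact (h1.add h2).congr (fun m => by ring)

lemma key_summable' {r : ℝ} (hr0 : 0 ≤ r) (hr : r < 1) :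
    Summable fun m : ℕ => ((m:ℝ)) * r ^ (m - 1) := by
  have h1 : Summable fun m : ℕ => ((m:ℝ) + 1) * r ^ m := by
    have := key_summable (r := r) (by rwa [abs_of_nonneg hr0])
    simpa [abs_of_nonneg hr0] using this
  have h2 : Summable fun m : ℕ => (((m+1:ℕ)):ℝ) * r ^ ((m+1) - 1) := by
    refine h1.congr (fun m => ?_)
    push_cast
    simp
  exact (summable_nat_add_iff 1).mp h2

lemma summable_h (hu : |u| < 1) : Summable fun m => c m * u ^ m := by
  refine (key_summable hu).of_norm_bounded (fun m => ?_)
  have h1 : |c m * u ^ m| ≤ 1 * |u| ^ m := by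
    rw [abs_mul, abs_pow]
    exact mul_le_mul_of_nonneg_right (abs_c_le_one m) (by positivity)
  calc ‖c m * u ^ m‖ = |c m * u ^ m| := rfl
    _ ≤ 1 * |u| ^ m := h1
    _ ≤ ((m:ℝ) + 1) * |u| ^ m := by
        apply mul_le_mul_of_nonneg_right _ (by positivity)
        linarith [Nat.cast_nonneg (α := ℝ) m]

lemma summable_hderiv (hu : |u| < 1) :
    Summable fun m : ℕ => c m * ((m:ℝ) * u ^ (m - 1)) := by
  refine (key_summable' (abs_nonneg u) hu).of_norm_bounded (fun m => ?_)
  rw [Real.norm_eq_abs, abs_mul, abs_mul, abs_pow]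
  calc |c m| * (|(m:ℝ)| * |u| ^ (m-1)) ≤ 1 * (|(m:ℝ)| * |u| ^ (m-1)) := by
        apply mul_le_mul_of_nonneg_right (abs_c_le_one m) (by positivity)
    _ = (m:ℝ) * |u| ^ (m-1) := by rw [one_mul, abs_of_nonneg (Nat.cast_nonneg m)]

def h (u : ℝ) : ℝ := ∑' m, c m * u ^ m

def D (u : ℝ) : ℝ := ∑' m : ℕ, ((m:ℝ) + 1) * c (m + 1) * u ^ m

lemma summable_D (hu : |u| < 1) : Summable fun m : ℕ => ((m:ℝ) + 1) * c (m + 1) * u ^ m := by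
  refine (key_summable hu).of_norm_bounded (fun m => ?_)
  rw [Real.norm_eq_abs, abs_mul, abs_mul, abs_pow, abs_of_nonneg (by positivity : (0:ℝ) ≤ (m:ℝ)+1)]
  calc ((m:ℝ)+1) * |c (m+1)| * |u| ^ m ≤ ((m:ℝ)+1) * 1 * |u| ^ m := by
        gcongr
        exact abs_c_le_one (m+1)
    _ = ((m:ℝ)+1) * |u| ^ m := by ring

lemma hasDerivAt_h (hu : |u| < 1) : HasDerivAt h (D u) u := by
  set r : ℝ := (1 + |u|) / 2 with hrdef
  have hu0 : (0:ℝ) ≤ |u| := abs_nonneg u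
  have hur : |u| < r := by rw [hrdef]; linarith
  have hr1 : r < 1 := by rw [hrdef]; linarith
  have hr0 : (0:ℝ) ≤ r := le_trans hu0 hur.le
  have hrpos : (0:ℝ) < r := lt_of_le_of_lt hu0 hur
  have key : HasDerivAt (fun z => ∑' m, c m * z ^ m)
      (∑' m, c m * ((m:ℝ) * u ^ (m - 1))) u := by
    refine hasDerivAt_tsum_of_isPreconnected
      (u := fun m : ℕ => (m:ℝ) * r ^ (m-1)) (g := fun m z => c m * z ^ m)
      (g' := fun m z => c m * ((m:ℝ) * z ^ (m - 1))) (t := Metric.ball (0:ℝ) r)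
      (key_summable' hr0 hr1) Metric.isOpen_ball (convex_ball (0:ℝ) r).isPreconnected
      (fun m z _ => (hasDerivAt_pow m z).const_mul (c m)) (fun m z hz => ?_)
      (y₀ := 0) (by simpa using hrpos) (summable_h (by simp)) (by simpa using hur)
    · have hz : |z| < r := by simpa [Real.dist_eq] using hz
      rw [Real.norm_eq_abs, abs_mul, abs_mul, abs_pow, abs_of_nonneg (Nat.cast_nonneg (α := ℝ) m)]
      calc |c m| * ((m:ℝ) * |z| ^ (m-1)) ≤ 1 * ((m:ℝ) * r ^ (m-1)) := by
            apply mul_le_mul (abs_c_le_one m) _ (by positivity) (by norm_num)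
            gcongr
        _ = (m:ℝ) * r ^ (m-1) := one_mul _
  have heq : (∑' m, c m * ((m:ℝ) * u ^ (m - 1))) = D u := by
    rw [Summable.tsum_eq_zero_add (summable_hderiv hu)]
    simp only [Nat.cast_zero, zero_mul, mul_zero, zero_add]
    unfold D
    apply tsum_congr
    intro m
    push_cast
    ring_nf
  rw [← heq]
  exact key




variable {u : ℝ}

lemma two_D_eq (hu : |u| < 1) : 2 * D u = ∑' m : ℕ, (2 * (m:ℝ) + 1) * c m * u ^ m := by
  unfold D
  rw [← tsum_mul_left]
  apply tsum_congr
  intro m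
  have := c_succ m
  linear_combination u ^ m * this

lemma summable_odd (hu : |u| < 1) : Summable fun m : ℕ => (2 * (m:ℝ) + 1) * c m * u ^ m := by
  have h1 := (key_summable hu).mul_left 2
  refine h1.of_norm_bounded (fun m => ?_)
  rw [Real.norm_eq_abs, abs_mul, abs_mul, abs_pow,
    abs_of_nonneg (by positivity : (0:ℝ) ≤ 2*(m:ℝ)+1)]
  calc (2*(m:ℝ)+1) * |c m| * |u| ^ m ≤ (2*(m:ℝ)+1) * 1 * |u| ^ m := by
        gcongr; exact abs_c_le_one m
    _ ≤ 2 * (((m:ℝ)+1) * |u| ^ m) := by nlinarith [pow_nonneg (abs_nonneg u) m]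

lemma summable_even (hu : |u| < 1) : Summable fun m : ℕ => 2 * (m:ℝ) * c m * u ^ m := by
  have h1 := (key_summable hu).mul_left 2
  refine h1.of_norm_bounded (fun m => ?_)
  rw [Real.norm_eq_abs, abs_mul, abs_mul, abs_pow,
    abs_of_nonneg (by positivity : (0:ℝ) ≤ 2*(m:ℝ))]
  calc (2*(m:ℝ)) * |c m| * |u| ^ m ≤ (2*(m:ℝ)) * 1 * |u| ^ m := by
        gcongr; exact abs_c_le_one m
    _ ≤ 2 * (((m:ℝ)+1) * |u| ^ m) := by nlinarith [pow_nonneg (abs_nonneg u) m]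

lemma u_D_eq (hu : |u| < 1) : 2 * u * D u = ∑' m : ℕ, 2 * (m:ℝ) * c m * u ^ m := by
  unfold D
  rw [← tsum_mul_left]
  rw [Summable.tsum_eq_zero_add (summable_even hu)]
  simp only [Nat.cast_zero, mul_zero, zero_mul, zero_add]
  apply tsum_congr
  intro m
  push_cast
  ring

lemma ode (hu : |u| < 1) : 2 * (1 - u) * D u = h u := by
  have e1 : 2 * (1 - u) * D u = 2 * D u - 2 * u * D u := by ring
  rw [e1, two_D_eq hu, u_D_eq hu, ← Summable.tsum_sub (summable_odd hu) (summable_even hu)]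
  unfold h
  apply tsum_congr
  intro m
  ring

lemma h_zero : h 0 = 1 := by
  unfold h
  rw [tsum_eq_single 0]
  · simp [c_zero]
  · intro m hm
    simp [zero_pow hm]

lemma G_const (hu : u ∈ Set.Ioo (-1:ℝ) 1) : (h u) ^ 2 * (1 - u) = 1 := by
  set G : ℝ → ℝ := fun v => (h v) ^ 2 * (1 - v) with hG
  have hd : ∀ v ∈ Set.Ioo (-1:ℝ) 1, HasDerivAt G 0 v := by
    intro v hv
    have hv' : |v| < 1 := abs_lt.mpr ⟨hv.1, hv.2⟩
    have h2 : HasDerivAt (fun w : ℝ => 1 - w) (-1) v := by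
      simpa using (hasDerivAt_id v).const_sub (1:ℝ)
    have h1 : HasDerivAt (fun w => (h w) ^ 2 * (1 - w))
        ((2 * h v ^ 1 * D v) * (1 - v) + (h v) ^ 2 * (-1)) v :=
      ((hasDerivAt_h hv').pow 2).mul h2
    have h3 : (2 * h v ^ 1 * D v) * (1 - v) + (h v) ^ 2 * (-1) = 0 := by
      have h4 := ode hv'
      linear_combination h v * h4
    rwa [h3] at h1
  have hconv : Convex ℝ (Set.Ioo (-1:ℝ) 1) := convex_Ioo _ _
  have hdiff : DifferentiableOn ℝ G (Set.Ioo (-1:ℝ) 1) :=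
    fun v hv => ((hd v hv).differentiableAt).differentiableWithinAt
  have hfd : ∀ v ∈ Set.Ioo (-1:ℝ) 1, fderivWithin ℝ G (Set.Ioo (-1:ℝ) 1) v = 0 := by
    intro v hv
    rw [fderivWithin_of_isOpen isOpen_Ioo hv]
    have := (hd v hv).hasFDerivAt.fderiv
    rw [this]
    ext w
    simp
  have := hconv.is_const_of_fderivWithin_eq_zero hdiff hfd hu (show (0:ℝ) ∈ Set.Ioo (-1:ℝ) 1 from Set.mem_Ioo.mpr ⟨by norm_num, by norm_num⟩)
  calc (h u)^2 * (1-u) = G u := rfl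
    _ = G 0 := this
    _ = 1 := by simp [hG, h_zero]

lemma h_eq_sqrt (hu0 : 0 ≤ u) (hu1 : u < 1) : h u = (Real.sqrt (1 - u))⁻¹ := by
  have hmem : u ∈ Set.Ioo (-1:ℝ) 1 := ⟨by linarith, hu1⟩
  have hG := G_const hmem
  have habs : |u| < 1 := abs_lt.mpr ⟨by linarith, hu1⟩
  have hpos : 1 ≤ h u := by
    have := Summable.le_tsum (summable_h habs) 0 (fun m _ => mul_nonneg (c_pos m).le (pow_nonneg hu0 m))
    simpa [c_zero, h] using this
  have h1u : (0:ℝ) < 1 - u := by linarith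
  have hs : Real.sqrt (1 - u) > 0 := Real.sqrt_pos.mpr h1u
  have key : (Real.sqrt (1 - u) * h u) ^ 2 = 1 := by
    rw [mul_pow, Real.sq_sqrt h1u.le]
    nlinarith [hG]
  have hnn : 0 ≤ Real.sqrt (1 - u) * h u := mul_nonneg (Real.sqrt_nonneg _) (by linarith)
  have : Real.sqrt (1 - u) * h u = 1 := by
    nlinarith [key, hnn]
  rw [inv_eq_one_div, eq_div_iff hs.ne']
  linear_combination this




variable {t : ℝ}

def a (m : ℕ) : ℝ := c m / (2 * m + 1)

lemma a_pos (m : ℕ) : 0 < a m := div_pos (c_pos m) (by positivity)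

lemma a_le_one (m : ℕ) : a m ≤ 1 := by
  have hm : (0:ℝ) ≤ (m:ℝ) := Nat.cast_nonneg m
  have h1 : (1:ℝ) ≤ 2 * m + 1 := by linarith
  unfold a
  rw [div_le_one (by linarith)]
  calc c m ≤ 1 := c_le_one m
    _ ≤ 2 * m + 1 := h1

lemma a_mul (m : ℕ) : a m * (2 * (m:ℝ) + 1) = c m := by
  unfold a; field_simp

def f (t : ℝ) : ℝ := ∑' m : ℕ, a m * t ^ (2 * m + 1)

lemma summable_fderiv (hr : |t| < 1) : Summable fun m : ℕ => c m * t ^ (2 * m) := by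
  have hg : Summable fun m : ℕ => (t ^ 2) ^ m := by
    apply summable_geometric_of_lt_one (by positivity)
    nlinarith [hr, abs_nonneg t, sq_abs t]
  refine hg.of_norm_bounded (fun m => ?_)
  rw [Real.norm_eq_abs, abs_mul, abs_pow, pow_mul, sq_abs]
  calc |c m| * (t ^ 2) ^ m ≤ 1 * (t ^ 2) ^ m :=
        mul_le_mul_of_nonneg_right (abs_c_le_one m) (by positivity)
    _ = (t ^ 2) ^ m := one_mul _

lemma hasDerivAt_f (hr : |t| < 1) :
    HasDerivAt f (∑' m : ℕ, c m * t ^ (2 * m)) t := by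
  set r : ℝ := (1 + |t|) / 2 with hrdef
  have ht0 : (0:ℝ) ≤ |t| := abs_nonneg t
  have htr : |t| < r := by rw [hrdef]; linarith
  have hr1 : r < 1 := by rw [hrdef]; linarith
  have hrpos : (0:ℝ) < r := lt_of_le_of_lt ht0 htr
  have hr2 : r ^ 2 < 1 := by nlinarith
  refine hasDerivAt_tsum_of_isPreconnected
    (u := fun m : ℕ => (r ^ 2) ^ m)
    (g := fun m z => a m * z ^ (2 * m + 1))
    (g' := fun m z => c m * z ^ (2 * m)) (t := Metric.ball (0:ℝ) r)
    ?_ Metric.isOpen_ball (convex_ball (0:ℝ) r).isPreconnected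
    (fun m z _ => ?_) (fun m z hz => ?_)
    (y₀ := 0) (by simpa using hrpos) ?_ (by simpa using htr)
  · exact summable_geometric_of_lt_one (by positivity) hr2
  · have h1 := (hasDerivAt_pow (2 * m + 1) z).const_mul (a m)
    have h2 : a m * (((2 * m + 1 : ℕ):ℝ) * z ^ (2 * m + 1 - 1)) = c m * z ^ (2 * m) := by
      rw [Nat.add_sub_cancel]
      push_cast
      linear_combination z ^ (2 * m) * a_mul m
    rw [h2] at h1
    exact h1
  · have hz : |z| < r := by simpa [Real.dist_eq] using hz
    rw [Real.norm_eq_abs, abs_mul, abs_pow, pow_mul, sq_abs]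
    calc |c m| * (z ^ 2) ^ m ≤ 1 * (r ^ 2) ^ m := by
          apply mul_le_mul (abs_c_le_one m) _ (by positivity) (by norm_num)
          have : z ^ 2 ≤ r ^ 2 := by nlinarith [abs_nonneg z, sq_abs z, hz]
          exact pow_le_pow_left₀ (by positivity) this m
      _ = (r ^ 2) ^ m := one_mul _
  · refine summable_zero.congr (fun m => ?_)
    simp [zero_pow (by omega : 2 * m + 1 ≠ 0)]

lemma f_eq_arcsin (hr : |t| < 1) : f t = Real.arcsin t := by
  have hmem : t ∈ Set.Ioo (-1:ℝ) 1 := ⟨(abs_lt.mp hr).1, (abs_lt.mp hr).2⟩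
  set g : ℝ → ℝ := fun s => Real.arcsin s - f s with hg
  have hd : ∀ v ∈ Set.Ioo (-1:ℝ) 1, HasDerivAt g 0 v := by
    intro v hv
    have hv' : |v| < 1 := abs_lt.mpr ⟨hv.1, hv.2⟩
    have h1 : HasDerivAt Real.arcsin (1 / Real.sqrt (1 - v ^ 2)) v :=
      Real.hasDerivAt_arcsin (by intro e; rw [e] at hv'; norm_num at hv')
        (by intro e; rw [e] at hv'; norm_num at hv')
    have h2 : HasDerivAt f (1 / Real.sqrt (1 - v ^ 2)) v := by
      have h3 := hasDerivAt_f hv'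
      have h4 : (∑' m : ℕ, c m * v ^ (2 * m)) = 1 / Real.sqrt (1 - v ^ 2) := by
        have h5 : (∑' m : ℕ, c m * v ^ (2 * m)) = h (v ^ 2) := by
          unfold h
          exact tsum_congr (fun m => by rw [pow_mul])
        have h6 : h (v ^ 2) = (Real.sqrt (1 - v ^ 2))⁻¹ := by
          apply h_eq_sqrt (by positivity)
          nlinarith [hv', abs_nonneg v, sq_abs v]
        rw [h5, h6, one_div]
      rwa [h4] at h3
    have := h1.sub h2
    rw [sub_self] at this
    exact this
  have hconv : Convex ℝ (Set.Ioo (-1:ℝ) 1) := convex_Ioo _ _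
  have hdiff : DifferentiableOn ℝ g (Set.Ioo (-1:ℝ) 1) :=
    fun v hv => ((hd v hv).differentiableAt).differentiableWithinAt
  have hfd : ∀ v ∈ Set.Ioo (-1:ℝ) 1, fderivWithin ℝ g (Set.Ioo (-1:ℝ) 1) v = 0 := by
    intro v hv
    rw [fderivWithin_of_isOpen isOpen_Ioo hv, (hd v hv).hasFDerivAt.fderiv]
    ext w
    simp
  have hzero : g 0 = 0 := by
    have hf0 : f 0 = 0 := by
      unfold f
      calc (∑' m : ℕ, a m * (0:ℝ) ^ (2 * m + 1)) = ∑' _ : ℕ, (0:ℝ) :=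
            tsum_congr (fun m => by simp [zero_pow (by omega : 2 * m + 1 ≠ 0)])
        _ = 0 := tsum_zero
    simp [hg, hf0, Real.arcsin_zero]
  have := hconv.is_const_of_fderivWithin_eq_zero hdiff hfd hmem
    (show (0:ℝ) ∈ Set.Ioo (-1:ℝ) 1 from Set.mem_Ioo.mpr ⟨by norm_num, by norm_num⟩)
  have h7 : g t = 0 := by rw [this, hzero]
  have h8 : Real.arcsin t - f t = 0 := h7
  linarith




variable {t : ℝ}

lemma summable_f_of_lt (habs : |t| < 1) :
    Summable fun m : ℕ => a m * t ^ (2 * m + 1) := by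
  refine (summable_geometric_of_lt_one (abs_nonneg t) habs).of_norm_bounded (fun m => ?_)
  rw [Real.norm_eq_abs, abs_mul, abs_pow]
  have h1 : |t| ^ (2 * m + 1) ≤ |t| ^ m :=
    pow_le_pow_of_le_one (abs_nonneg t) habs.le (by omega)
  have h2 : |a m| ≤ 1 := abs_le.mpr ⟨by linarith [a_pos m], a_le_one m⟩
  calc |a m| * |t| ^ (2 * m + 1) ≤ 1 * |t| ^ m :=
        mul_le_mul h2 h1 (by positivity) one_pos.le
    _ = |t| ^ m := one_mul _

lemma partial_le (N : ℕ) : (∑ m ∈ Finset.range N, a m) ≤ π / 2 := by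
  have hP : ∀ s : ℝ, s ∈ Set.Ioo (0:ℝ) 1 →
      (∑ m ∈ Finset.range N, a m * s ^ (2 * m + 1)) ≤ π / 2 := by
    intro s hs
    have habs : |s| < 1 := abs_lt.mpr ⟨by linarith [hs.1], hs.2⟩
    have h1 : (∑ m ∈ Finset.range N, a m * s ^ (2 * m + 1)) ≤ f s :=
      Summable.sum_le_tsum _ (fun m _ => mul_nonneg (a_pos m).le (pow_nonneg hs.1.le _))
        (summable_f_of_lt habs)
    calc (∑ m ∈ Finset.range N, a m * s ^ (2 * m + 1)) ≤ f s := h1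
      _ = Real.arcsin s := f_eq_arcsin habs
      _ ≤ π / 2 := Real.arcsin_le_pi_div_two s
  set P : ℝ → ℝ := fun s => ∑ m ∈ Finset.range N, a m * s ^ (2 * m + 1) with hPdef
  have hcont : Continuous P := by
    apply continuous_finset_sum
    intro m _
    exact continuous_const.mul (continuous_pow _)
  have htend : Filter.Tendsto P (nhdsWithin 1 (Set.Iio 1)) (nhds (P 1)) :=
    (hcont.tendsto 1).mono_left nhdsWithin_le_nhds
  have hev : ∀ᶠ s in nhdsWithin 1 (Set.Iio 1), P s ≤ π / 2 := by
    filter_upwards [Ioo_mem_nhdsLT_of_mem (show (1:ℝ) ∈ Set.Ioc (0:ℝ) 1 by norm_num)]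
      with s hs using hP s hs
  have h2 : P 1 ≤ π / 2 := le_of_tendsto htend hev
  simpa [hPdef] using h2

lemma summable_a : Summable a :=
  summable_of_sum_range_le (fun m => (a_pos m).le) partial_le

lemma tsum_a : ∑' m, a m = π / 2 := by
  have hle : ∑' m, a m ≤ π / 2 :=
    Summable.tsum_le_of_sum_range_le summable_a partial_le
  have hge : π / 2 ≤ ∑' m, a m := by
    have harc : ∀ s : ℝ, s ∈ Set.Ioo (0:ℝ) 1 → Real.arcsin s ≤ ∑' m, a m := by
      intro s hs
      have habs : |s| < 1 := abs_lt.mpr ⟨by linarith [hs.1], hs.2⟩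
      rw [← f_eq_arcsin habs]
      refine Summable.tsum_le_tsum (fun m => ?_) (summable_f_of_lt habs) summable_a
      calc a m * s ^ (2 * m + 1) ≤ a m * 1 := by
            apply mul_le_mul_of_nonneg_left _ (a_pos m).le
            exact pow_le_one₀ hs.1.le hs.2.le
        _ = a m := mul_one _
    have htend : Filter.Tendsto Real.arcsin (nhdsWithin 1 (Set.Iio 1)) (nhds (π / 2)) := by
      have := (Real.continuous_arcsin.tendsto 1).mono_left
        (nhdsWithin_le_nhds (s := Set.Iio (1:ℝ)))
      rwa [Real.arcsin_one] at this
    refine le_of_tendsto htend ?_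
    filter_upwards [Ioo_mem_nhdsLT_of_mem (show (1:ℝ) ∈ Set.Ioc (0:ℝ) 1 by norm_num)]
      with s hs using harc s hs
  linarith

lemma summable_f_all (h : |t| ≤ 1) : Summable fun m : ℕ => a m * t ^ (2 * m + 1) := by
  refine summable_a.of_norm_bounded (fun m => ?_)
  rw [Real.norm_eq_abs, abs_mul, abs_pow]
  calc |a m| * |t| ^ (2 * m + 1) ≤ |a m| * 1 := by
        apply mul_le_mul_of_nonneg_left _ (abs_nonneg _)
        exact pow_le_one₀ (abs_nonneg t) h
    _ = |a m| := mul_one _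
    _ = a m := abs_of_pos (a_pos m)

lemma tsum_f_eq_arcsin (h : |t| ≤ 1) :
    (∑' m : ℕ, a m * t ^ (2 * m + 1)) = Real.arcsin t := by
  rcases lt_or_eq_of_le h with hlt | heq
  · exact f_eq_arcsin hlt
  · rcases abs_eq (by norm_num : (0:ℝ) ≤ 1) |>.mp heq with h1 | h1
    · rw [h1]
      simp only [one_pow, mul_one]
      rw [tsum_a, Real.arcsin_one]
    · rw [h1]
      have hodd : ∀ m : ℕ, a m * (-1:ℝ) ^ (2 * m + 1) = -(a m) := by
        intro m
        rw [Odd.neg_one_pow ⟨m, by ring⟩, mul_neg_one]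
      calc (∑' m : ℕ, a m * (-1:ℝ) ^ (2 * m + 1)) = ∑' m : ℕ, -(a m) :=
            tsum_congr hodd
        _ = -(∑' m : ℕ, a m) := tsum_neg
        _ = -(π / 2) := by rw [tsum_a]
        _ = Real.arcsin (-1) := by rw [Real.arcsin_neg, Real.arcsin_one]



lemma psd_pow (n p : ℕ) (y : Fin n → EuclideanSpace ℝ (Fin 3)) :
    0 ≤ ∑ i : Fin n, ∑ j : Fin n, (⟪y i, y j⟫ : ℝ) ^ p := by
  have hinner : ∀ i j, (⟪y i, y j⟫ : ℝ) = ∑ c : Fin 3, y i c * y j c := by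
    intro i j
    simp [PiLp.inner_apply, RCLike.inner_apply, conj_trivial, mul_comm]
  have hexp : ∀ i j, (⟪y i, y j⟫ : ℝ) ^ p
      = ∑ g : Fin p → Fin 3, (∏ s : Fin p, y i (g s)) * (∏ s : Fin p, y j (g s)) := by
    intro i j
    rw [hinner]
    have h1 : (∑ c : Fin 3, y i c * y j c) ^ p
        = ∏ _s : Fin p, (∑ c : Fin 3, y i c * y j c) := by
      rw [Finset.prod_const, Finset.card_univ, Fintype.card_fin]
    rw [h1, Finset.prod_univ_sum]
    apply Finset.sum_congr rfl
    intro g _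
    rw [← Finset.prod_mul_distrib]
  calc ∑ i : Fin n, ∑ j : Fin n, (⟪y i, y j⟫ : ℝ) ^ p
      = ∑ g : Fin p → Fin 3, (∑ i : Fin n, ∏ s : Fin p, y i (g s)) ^ 2 := by
        simp only [hexp]
        calc ∑ i : Fin n, ∑ j : Fin n, ∑ g : Fin p → Fin 3,
              (∏ s : Fin p, y i (g s)) * (∏ s : Fin p, y j (g s))
            = ∑ i : Fin n, ∑ g : Fin p → Fin 3, ∑ j : Fin n,
              (∏ s : Fin p, y i (g s)) * (∏ s : Fin p, y j (g s)) :=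
              Finset.sum_congr rfl (fun i _ => Finset.sum_comm)
          _ = ∑ g : Fin p → Fin 3, ∑ i : Fin n, ∑ j : Fin n,
              (∏ s : Fin p, y i (g s)) * (∏ s : Fin p, y j (g s)) :=
              Finset.sum_comm
          _ = ∑ g : Fin p → Fin 3, (∑ i : Fin n, ∏ s : Fin p, y i (g s))
              * (∑ j : Fin n, ∏ s : Fin p, y j (g s)) :=
              Finset.sum_congr rfl (fun g _ => (Finset.sum_mul_sum _ _ _ _).symm)
          _ = ∑ g : Fin p → Fin 3, (∑ i : Fin n, ∏ s : Fin p, y i (g s)) ^ 2 :=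
              Finset.sum_congr rfl (fun g _ => (sq _).symm)
    _ ≥ 0 := Finset.sum_nonneg (fun g _ => sq_nonneg _)

lemma S_nonneg (n : ℕ) (y : Fin n → EuclideanSpace ℝ (Fin 3)) (hy : ∀ i, ‖y i‖ = 1) :
    0 ≤ ∑ i : Fin n, ∑ j : Fin n, Real.arcsin ⟪y i, y j⟫ := by
  have habs : ∀ i j, |(⟪y i, y j⟫ : ℝ)| ≤ 1 := by
    intro i j
    have h1 := abs_real_inner_le_norm (y i) (y j)
    rw [hy i, hy j] at h1
    simpa using h1
  calc (0:ℝ) ≤ ∑' m : ℕ, ∑ i : Fin n, ∑ j : Fin n,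
        a m * (⟪y i, y j⟫ : ℝ) ^ (2 * m + 1) := by
        apply tsum_nonneg
        intro m
        have h3 : (∑ i : Fin n, ∑ j : Fin n, a m * (⟪y i, y j⟫ : ℝ) ^ (2 * m + 1))
            = a m * ∑ i : Fin n, ∑ j : Fin n, (⟪y i, y j⟫ : ℝ) ^ (2 * m + 1) := by
          simp only [← Finset.mul_sum]
        rw [h3]
        exact mul_nonneg (a_pos m).le (psd_pow n (2 * m + 1) y)
    _ = ∑ i : Fin n, ∑' m : ℕ, ∑ j : Fin n,
        a m * (⟪y i, y j⟫ : ℝ) ^ (2 * m + 1) :=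
        Summable.tsum_finsetSum (fun i _ => summable_sum (fun j _ => summable_f_all (habs i j)))
    _ = ∑ i : Fin n, ∑ j : Fin n, ∑' m : ℕ,
        a m * (⟪y i, y j⟫ : ℝ) ^ (2 * m + 1) :=
        Finset.sum_congr rfl (fun i _ => Summable.tsum_finsetSum (fun j _ => summable_f_all (habs i j)))
    _ = ∑ i : Fin n, ∑ j : Fin n, Real.arcsin ⟪y i, y j⟫ :=
        Finset.sum_congr rfl (fun i _ => Finset.sum_congr rfl
          (fun j _ => tsum_f_eq_arcsin (habs i j)))


end SphSum
end

open SphSum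

theorem sum_spherical_dist_even (k : ℕ) (x : Fin (2 * k) → EuclideanSpace ℝ (Fin 3))
    (hx : ∀ i, ‖x i‖ = 1) :
    (∑ i : Fin (2 * k), ∑ j : Fin (2 * k),
        if i < j then Real.arccos ⟪x i, x j⟫ else 0) ≤ π * k ^ 2 ∧
    ((∃ σ : Equiv.Perm (Fin (2 * k)), ∀ i, x (σ i) = -x i ∧ σ i ≠ i) →
      (∑ i : Fin (2 * k), ∑ j : Fin (2 * k),
        if i < j then Real.arccos ⟪x i, x j⟫ else 0) = π * k ^ 2) := by
  have hsym : ∀ i j : Fin (2 * k), Real.arccos ⟪x i, x j⟫ = Real.arccos ⟪x j, x i⟫ := by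
    intro i j
    rw [real_inner_comm]
  have hdiag : ∀ i : Fin (2 * k), Real.arccos ⟪x i, x i⟫ = 0 := by
    intro i
    have h1 : (⟪x i, x i⟫ : ℝ) = 1 := by
      rw [real_inner_self_eq_norm_sq, hx i]
      norm_num
    rw [h1, Real.arccos_one]
  have hsplit : (∑ i : Fin (2 * k), ∑ j : Fin (2 * k), Real.arccos ⟪x i, x j⟫)
      = 2 * (∑ i : Fin (2 * k), ∑ j : Fin (2 * k),
          if i < j then Real.arccos ⟪x i, x j⟫ else 0) := by
    have hpt : ∀ i j : Fin (2 * k), Real.arccos ⟪x i, x j⟫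
        = (if i < j then Real.arccos ⟪x i, x j⟫ else 0)
          + (if j < i then Real.arccos ⟪x i, x j⟫ else 0) := by
      intro i j
      rcases lt_trichotomy i j with h | h | h
      · rw [if_pos h, if_neg (not_lt.mpr h.le), add_zero]
      · subst h
        rw [if_neg (lt_irrefl i), add_zero, hdiag i]
      · rw [if_neg (not_lt.mpr h.le), if_pos h, zero_add]
    have hswap : (∑ i : Fin (2 * k), ∑ j : Fin (2 * k),
          if j < i then Real.arccos ⟪x i, x j⟫ else 0)
        = ∑ i : Fin (2 * k), ∑ j : Fin (2 * k),
          if i < j then Real.arccos ⟪x i, x j⟫ else 0 := by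
      rw [Finset.sum_comm]
      apply Finset.sum_congr rfl
      intro i _
      apply Finset.sum_congr rfl
      intro j _
      rw [hsym j i]
    calc (∑ i : Fin (2 * k), ∑ j : Fin (2 * k), Real.arccos ⟪x i, x j⟫)
        = ∑ i : Fin (2 * k), ∑ j : Fin (2 * k),
            ((if i < j then Real.arccos ⟪x i, x j⟫ else 0)
              + (if j < i then Real.arccos ⟪x i, x j⟫ else 0)) :=
          Finset.sum_congr rfl (fun i _ => Finset.sum_congr rfl (fun j _ => hpt i j))
      _ = (∑ i : Fin (2 * k), ∑ j : Fin (2 * k),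
            if i < j then Real.arccos ⟪x i, x j⟫ else 0)
          + ∑ i : Fin (2 * k), ∑ j : Fin (2 * k),
            if j < i then Real.arccos ⟪x i, x j⟫ else 0 := by
          rw [← Finset.sum_add_distrib]
          apply Finset.sum_congr rfl
          intro i _
          rw [← Finset.sum_add_distrib]
      _ = 2 * (∑ i : Fin (2 * k), ∑ j : Fin (2 * k),
            if i < j then Real.arccos ⟪x i, x j⟫ else 0) := by
          rw [hswap]; ring
  constructor
  · -- inequality
    have hS := S_nonneg (2 * k) x hx
    have hT : (∑ i : Fin (2 * k), ∑ j : Fin (2 * k), Real.arccos ⟪x i, x j⟫)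
        = (2 * k : ℝ) ^ 2 * (π / 2)
          - ∑ i : Fin (2 * k), ∑ j : Fin (2 * k), Real.arcsin ⟪x i, x j⟫ := by
      have : ∀ i : Fin (2 * k), (∑ j : Fin (2 * k), Real.arccos ⟪x i, x j⟫)
          = ∑ j : Fin (2 * k), (π / 2 - Real.arcsin ⟪x i, x j⟫) :=
        fun i => Finset.sum_congr rfl
          (fun j _ => Real.arccos_eq_pi_div_two_sub_arcsin _)
      calc (∑ i : Fin (2 * k), ∑ j : Fin (2 * k), Real.arccos ⟪x i, x j⟫)
          = ∑ i : Fin (2 * k), ∑ j : Fin (2 * k), (π / 2 - Real.arcsin ⟪x i, x j⟫) :=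
            Finset.sum_congr rfl (fun i _ => this i)
        _ = ∑ i : Fin (2 * k), ((2 * k : ℝ) * (π / 2)
              - ∑ j : Fin (2 * k), Real.arcsin ⟪x i, x j⟫) := by
            apply Finset.sum_congr rfl
            intro i _
            rw [Finset.sum_sub_distrib, Finset.sum_const, Finset.card_univ, Fintype.card_fin]
            push_cast
            ring_nf
        _ = (2 * k : ℝ) ^ 2 * (π / 2)
              - ∑ i : Fin (2 * k), (∑ j : Fin (2 * k), Real.arcsin ⟪x i, x j⟫) := by
            rw [Finset.sum_sub_distrib, Finset.sum_const, Finset.card_univ, Fintype.card_fin]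
            push_cast
            ring
    have hk : (0:ℝ) ≤ (k:ℝ) := Nat.cast_nonneg k
    have := hsplit
    push_cast at hT ⊢
    nlinarith [hS, hT, hsplit, Real.pi_pos]
  · rintro ⟨σ, hσ⟩
    have hrow : ∀ j : Fin (2 * k), (∑ i : Fin (2 * k), Real.arccos ⟪x i, x j⟫) = π * k := by
      intro j
      have h1 : (∑ i : Fin (2 * k), Real.arccos ⟪x i, x j⟫)
          = ∑ i : Fin (2 * k), Real.arccos ⟪x (σ i), x j⟫ :=
        (Equiv.sum_comp σ (fun i => Real.arccos ⟪x i, x j⟫)).symm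
      have h2 : ∀ i : Fin (2 * k), Real.arccos ⟪x (σ i), x j⟫ = π - Real.arccos ⟪x i, x j⟫ := by
        intro i
        rw [(hσ i).1, inner_neg_left]
        push_cast
        rw [Real.arccos_neg]
      have h3 : (∑ i : Fin (2 * k), Real.arccos ⟪x (σ i), x j⟫)
          = (2 * k : ℝ) * π - ∑ i : Fin (2 * k), Real.arccos ⟪x i, x j⟫ := by
        calc (∑ i : Fin (2 * k), Real.arccos ⟪x (σ i), x j⟫)
            = ∑ i : Fin (2 * k), (π - Real.arccos ⟪x i, x j⟫) :=
              Finset.sum_congr rfl (fun i _ => h2 i)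
          _ = _ := by
              rw [Finset.sum_sub_distrib, Finset.sum_const, Finset.card_univ, Fintype.card_fin]
              push_cast
              ring_nf
      rw [h3] at h1
      linarith
    have hT : (∑ i : Fin (2 * k), ∑ j : Fin (2 * k), Real.arccos ⟪x i, x j⟫)
        = 2 * (π * k ^ 2) := by
      rw [Finset.sum_comm]
      calc (∑ j : Fin (2 * k), ∑ i : Fin (2 * k), Real.arccos ⟪x i, x j⟫)
          = ∑ _j : Fin (2 * k), π * (k:ℝ) := Finset.sum_congr rfl (fun j _ => hrow j)
        _ = (2 * k : ℝ) * (π * k) := by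
            rw [Finset.sum_const, Finset.card_univ, Fintype.card_fin]
            push_cast
            ring
        _ = 2 * (π * k ^ 2) := by ring
    rw [hT] at hsplit
    linarith
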